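/- For nonzero polynomials p, q ∈ ℝ[X₁,…,Xₙ], the Newton polytope of pq equals the Minkowski sum of the Newton polytopes of p and q: New(pq) = New(p) + New(q). -/

import Mathlib

set_option maxHeartbeats 1000000


open MvPolynomial Pointwise

theorem newton_polytope_mul (n : ℕ) (p q : MvPolynomial (Fin n) ℝ)
    (hp : p ≠ 0) (hq : q ≠ 0) :
    convexHull ℝ ((fun α : Fin n →₀ ℕ => fun i => (α i : ℝ)) '' ((p * q).support : Set (Fin n →₀ ℕ)))
      = convexHull ℝ ((fun α : Fin n →₀ ℕ => fun i => (α i : ℝ)) '' (p.support : Set (Fin n →₀ ℕ)))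
        + convexHull ℝ ((fun α : Fin n →₀ ℕ => fun i => (α i : ℝ)) '' (q.support : Set (Fin n →₀ ℕ))) := by

  set f : (Fin n →₀ ℕ) → (Fin n → ℝ) := fun α => fun i => (α i : ℝ) with hf
  have hfadd : ∀ α β : Fin n →₀ ℕ, f (α + β) = f α + f β := by
    intro α β; funext i; simp [hf]
  have hfinj : Function.Injective f := by
    intro α β h
    ext i
    exact Nat.cast_injective (congrFun h i)
  set A := convexHull ℝ (f '' (p.support : Set (Fin n →₀ ℕ))) with hA
  set B := convexHull ℝ (f '' (q.support : Set (Fin n →₀ ℕ))) with hB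
  have himg : f '' ((p.support : Set (Fin n →₀ ℕ)) + (q.support : Set (Fin n →₀ ℕ)))
      = f '' (p.support : Set (Fin n →₀ ℕ)) + f '' (q.support : Set (Fin n →₀ ℕ)) := by
    ext x
    constructor
    · rintro ⟨y, ⟨a, ha, b, hb, rfl⟩, rfl⟩
      exact ⟨f a, ⟨a, ha, rfl⟩, f b, ⟨b, hb, rfl⟩, (hfadd a b).symm⟩
    · rintro ⟨-, ⟨a, ha, rfl⟩, -, ⟨b, hb, rfl⟩, rfl⟩
      exact ⟨a + b, ⟨a, ha, b, hb, rfl⟩, hfadd a b⟩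
  apply subset_antisymm
  · have h1 : ((p * q).support : Set (Fin n →₀ ℕ))
        ⊆ (p.support : Set (Fin n →₀ ℕ)) + (q.support : Set (Fin n →₀ ℕ)) := by
      rw [← Finset.coe_add]
      exact_mod_cast Finset.coe_subset.mpr (MvPolynomial.support_mul p q)
    calc convexHull ℝ (f '' ((p * q).support : Set (Fin n →₀ ℕ)))
        ⊆ convexHull ℝ (f '' ((p.support : Set (Fin n →₀ ℕ)) + (q.support : Set (Fin n →₀ ℕ)))) :=
          convexHull_mono (Set.image_mono h1)
      _ = convexHull ℝ (f '' (p.support : Set (Fin n →₀ ℕ)) + f '' (q.support : Set (Fin n →₀ ℕ))) := by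
          rw [himg]
      _ = A + B := convexHull_add _ _
  · have hAcomp : IsCompact A := (p.support.finite_toSet.image f).isCompact_convexHull ℝ
    have hBcomp : IsCompact B := (q.support.finite_toSet.image f).isCompact_convexHull ℝ
    have hconv : Convex ℝ (A + B) := (convex_convexHull ℝ _).add (convex_convexHull ℝ _)
    have hcomp : IsCompact (A + B) := hAcomp.add hBcomp
    have hext : (A + B).extremePoints ℝ ⊆ f '' ((p * q).support : Set (Fin n →₀ ℕ)) := by
      rintro v hv
      obtain ⟨a, ha, b, hb, rfl⟩ := hv.1
      -- a is extreme in A, b is extreme in B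
      have haext : a ∈ A.extremePoints ℝ := by
        refine ⟨ha, ?_⟩
        intro a₁ ha₁ a₂ ha₂ hseg
        obtain ⟨t, s, ht, hs, hts, heq⟩ := hseg
        have hseg' : a + b ∈ openSegment ℝ (a₁ + b) (a₂ + b) := by
          refine ⟨t, s, ht, hs, hts, ?_⟩
          rw [smul_add, smul_add, show t • a₁ + t • b + (s • a₂ + s • b)
            = (t • a₁ + s • a₂) + (t + s) • b by rw [add_smul]; abel, heq, hts, one_smul]
        have h2 := hv.2 (Set.add_mem_add ha₁ hb) (Set.add_mem_add ha₂ hb) hseg'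
        exact add_right_cancel h2
      have hbext : b ∈ B.extremePoints ℝ := by
        refine ⟨hb, ?_⟩
        intro b₁ hb₁ b₂ hb₂ hseg
        obtain ⟨t, s, ht, hs, hts, heq⟩ := hseg
        have hseg' : a + b ∈ openSegment ℝ (a + b₁) (a + b₂) := by
          refine ⟨t, s, ht, hs, hts, ?_⟩
          rw [smul_add, smul_add, show t • a + t • b₁ + (s • a + s • b₂)
            = (t + s) • a + (t • b₁ + s • b₂) by rw [add_smul]; abel, heq, hts, one_smul]
        have h2 := hv.2 (Set.add_mem_add ha hb₁) (Set.add_mem_add ha hb₂) hseg'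
        exact add_left_cancel h2
      obtain ⟨α, hα, rfl⟩ := extremePoints_convexHull_subset haext
      obtain ⟨β, hβ, rfl⟩ := extremePoints_convexHull_subset hbext
      have huniq : ∀ a' ∈ A, ∀ b' ∈ B, a' + b' = f α + f β → a' = f α ∧ b' = f β := by
        intro a' ha' b' hb' h
        have hseg : f α + f β ∈ openSegment ℝ (f α + b') (a' + f β) := by
          refine ⟨1/2, 1/2, by norm_num, by norm_num, by norm_num, ?_⟩
          rw [show (1/2 : ℝ) • (f α + b') + (1/2 : ℝ) • (a' + f β)
            = (1/2 : ℝ) • (f α + f β) + (1/2 : ℝ) • (a' + b') by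
              rw [smul_add, smul_add, smul_add, smul_add]; abel, h, ← add_smul]
          norm_num
        have h2 := hv.2 (Set.add_mem_add (subset_convexHull ℝ _ ⟨α, hα, rfl⟩) hb')
          (Set.add_mem_add ha' (subset_convexHull ℝ _ ⟨β, hβ, rfl⟩)) hseg
        have hb2 : b' = f β := add_left_cancel h2
        refine ⟨?_, hb2⟩
        subst hb2
        exact add_right_cancel h
      have hcoeff : MvPolynomial.coeff (α + β) (p * q)
          = MvPolynomial.coeff α p * MvPolynomial.coeff β q := by
        rw [MvPolynomial.coeff_mul]
        apply Finset.sum_eq_single (α, β)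
        · rintro ⟨u, w⟩ hmem hne
          rw [Finset.HasAntidiagonal.mem_antidiagonal] at hmem
          by_cases hu : u ∈ p.support
          · by_cases hw : w ∈ q.support
            · exfalso
              have h1 : f u ∈ A := subset_convexHull ℝ _ ⟨u, hu, rfl⟩
              have h2 : f w ∈ B := subset_convexHull ℝ _ ⟨w, hw, rfl⟩
              have hsum : f u + f w = f α + f β := by
                rw [← hfadd, ← hfadd, hmem]
              obtain ⟨e1, e2⟩ := huniq _ h1 _ h2 hsum
              exact hne (by rw [hfinj e1, hfinj e2])
            · rw [MvPolynomial.notMem_support_iff.mp hw, mul_zero]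
          · rw [MvPolynomial.notMem_support_iff.mp hu, zero_mul]
        · intro h
          exact absurd (by rw [Finset.HasAntidiagonal.mem_antidiagonal]) h
      refine ⟨α + β, ?_, hfadd α β⟩
      rw [Finset.mem_coe, MvPolynomial.mem_support_iff, hcoeff]
      exact mul_ne_zero (MvPolynomial.mem_support_iff.mp hα) (MvPolynomial.mem_support_iff.mp hβ)
    calc A + B = closure (convexHull ℝ ((A + B).extremePoints ℝ)) :=
          (closure_convexHull_extremePoints hcomp hconv).symm
      _ ⊆ closure (convexHull ℝ (f '' ((p * q).support : Set (Fin n →₀ ℕ)))) :=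
          closure_mono (convexHull_mono hext)
      _ = convexHull ℝ (f '' ((p * q).support : Set (Fin n →₀ ℕ))) :=
          (((p * q).support.finite_toSet.image f).isClosed_convexHull ℝ).closure_eq
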